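/- If f is a morphism on finite words over {1,2,3} with f(w) = w, where w is the Arshon sequence, and at least one of f(1), f(2), f(3) is a nonempty word, then all three of f(1), f(2), f(3) are nonempty words. -/

import Mathlib

open List Filter

/-- Image of a letter in an odd (1-based) position under ψ. -/
def oddBlock : ℕ → List ℕ
  | 1 => [1, 2, 3]
  | 2 => [2, 3, 1]
  | 3 => [3, 1, 2]
  | _ => []

/-- Image of a letter in an even (1-based) position under ψ. -/
def evenBlock : ℕ → List ℕ
  | 1 => [3, 2, 1]
  | 2 => [1, 3, 2]
  | 3 => [2, 1, 3]
  | _ => []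

/-- The Arshon map ψ: replace the letter at each odd (1-based) position by its
`oddBlock`, and the letter at each even position by its `evenBlock`. -/
def psi (l : List ℕ) : List ℕ :=
  ((l.zipIdx.map Prod.swap).map fun p => if p.1 % 2 = 0 then oddBlock p.2 else evenBlock p.2).flatten

/-- The Arshon sequence `w = lim ψ^k(1)` as an infinite word: since
`|ψ^[n+1] [1]| = 3^(n+1) > n`, the `n`-th letter (0-based) is well defined. -/
def arshon (n : ℕ) : ℕ := (psi^[n + 1] [1]).getD n 0

/-- A word over the alphabet {1,2,3}. -/
def Word123 (l : List ℕ) : Prop := ∀ a ∈ l, a = 1 ∨ a = 2 ∨ a = 3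

/-- A morphism on finite words over {1,2,3}. -/
def IsMorphism123 (f : List ℕ → List ℕ) : Prop :=
  (∀ u v, f (u ++ v) = f u ++ f v) ∧ ∀ l, Word123 l → Word123 (f l)

/-- `f(w) = w` where `w` is the infinite Arshon word: the image of every finite
prefix of `w` is again a prefix of `w`, and these images have unbounded length
(so that `f(w)` is genuinely the infinite word `w`). -/
def FixesArshon (f : List ℕ → List ℕ) : Prop :=
  (∀ n, f ((List.range n).map arshon)
      = (List.range (f ((List.range n).map arshon)).length).map arshon) ∧
  Tendsto (fun n => (f ((List.range n).map arshon)).length) atTop atTop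

/-- The infinite word `s` is obtained by iterating the morphism `f` on the
letter 1: `f(1)` begins with 1, `|f^k(1)| → ∞`, and `s = lim f^k(1)`. -/
def IterLimit (f : List ℕ → List ℕ) (s : ℕ → ℕ) : Prop :=
  (∃ t, f [1] = 1 :: t) ∧
  Tendsto (fun k => (f^[k] [1]).length) atTop atTop ∧
  ∀ k n, n < (f^[k] [1]).length → (f^[k] [1]).getD n 0 = s n

/-! ### Auxiliary infrastructure -/

def cyc : ℕ → ℕ
  | 1 => 2
  | 2 => 3
  | 3 => 1
  | _ => 0

def psiA : ℕ → List ℕ → List ℕ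
  | _, [] => []
  | off, a :: l => (if off % 2 = 0 then oddBlock a else evenBlock a) ++ psiA (off + 1) l

lemma psiA_eq (off : ℕ) (l : List ℕ) :
    (((l.zipIdx off).map Prod.swap).map fun p => if p.1 % 2 = 0 then oddBlock p.2 else evenBlock p.2).flatten
      = psiA off l := by
  induction l generalizing off with
  | nil => rfl
  | cons a l ih => rw [List.zipIdx_cons, List.map_cons, List.map_cons, List.flatten_cons, ih]; rfl

lemma psi_eq (l : List ℕ) : psi l = psiA 0 l := by
  rw [psi, psiA_eq]

lemma psiA_append (off : ℕ) (u v : List ℕ) :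
    psiA off (u ++ v) = psiA off u ++ psiA (off + u.length) v := by
  induction u generalizing off with
  | nil => simp [psiA]
  | cons a u ih =>
      show (if off % 2 = 0 then oddBlock a else evenBlock a) ++ psiA (off + 1) (u ++ v)
          = ((if off % 2 = 0 then oddBlock a else evenBlock a) ++ psiA (off + 1) u)
            ++ psiA (off + (a :: u).length) v
      rw [ih (off + 1), List.length_cons, List.append_assoc]
      have e : off + 1 + u.length = off + (u.length + 1) := by omega
      rw [e]

lemma word_oddBlock (a : ℕ) : Word123 (oddBlock a) := by
  match a with
  | 0 => intro x hx; simp [oddBlock] at hx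
  | 1 => intro x hx; simp [oddBlock] at hx; omega
  | 2 => intro x hx; simp [oddBlock] at hx; omega
  | 3 => intro x hx; simp [oddBlock] at hx; omega
  | (n+4) => intro x hx; simp [oddBlock] at hx

lemma word_evenBlock (a : ℕ) : Word123 (evenBlock a) := by
  match a with
  | 0 => intro x hx; simp [evenBlock] at hx
  | 1 => intro x hx; simp [evenBlock] at hx; omega
  | 2 => intro x hx; simp [evenBlock] at hx; omega
  | 3 => intro x hx; simp [evenBlock] at hx; omega
  | (n+4) => intro x hx; simp [evenBlock] at hx

lemma word_psiA (off : ℕ) (l : List ℕ) : Word123 (psiA off l) := by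
  induction l generalizing off with
  | nil => intro x hx; simp [psiA] at hx
  | cons a l ih =>
      intro x hx
      rw [psiA, List.mem_append] at hx
      rcases hx with hx | hx
      · split at hx
        · exact word_oddBlock a x hx
        · exact word_evenBlock a x hx
      · exact ih (off + 1) x hx

lemma len_block (b : ℕ) (hb : b = 1 ∨ b = 2 ∨ b = 3) :
    (oddBlock b).length = 3 ∧ (evenBlock b).length = 3 := by
  rcases hb with h | h | h <;> subst h <;> decide

lemma len_psiA (off : ℕ) (l : List ℕ) (hl : Word123 l) :
    (psiA off l).length = 3 * l.length := by
  induction l generalizing off with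
  | nil => rfl
  | cons a l ih =>
      have ha := hl a (List.mem_cons_self (a := a) (l := l))
      have hlen := len_block a ha
      have ih' := ih (off + 1) (fun x hx => hl x (List.mem_cons_of_mem a hx))
      rw [psiA, List.length_append, ih', List.length_cons]
      split <;> omega

lemma word_W (m : ℕ) : Word123 (psi^[m] [1]) := by
  cases m with
  | zero => intro x hx; simp at hx; omega
  | succ m =>
      rw [Function.iterate_succ_apply', psi_eq]
      exact word_psiA 0 _

lemma len_W (m : ℕ) : (psi^[m] [1]).length = 3 ^ m := by
  induction m with
  | zero => rfl
  | succ m ih =>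
      rw [Function.iterate_succ_apply', psi_eq, len_psiA 0 _ (word_W m), ih]
      ring

lemma psi_prefix {u v : List ℕ} (h : u <+: v) : psi u <+: psi v := by
  obtain ⟨t, ht⟩ := h
  refine ⟨psiA (0 + u.length) t, ?_⟩
  rw [psi_eq u, psi_eq v, ← ht, psiA_append]

lemma W_prefix_succ (m : ℕ) : psi^[m] [1] <+: psi^[m+1] [1] := by
  induction m with
  | zero => exact ⟨[2, 3], by decide +kernel⟩
  | succ m ih =>
      have h2 := psi_prefix ih
      rwa [← Function.iterate_succ_apply' psi m, ← Function.iterate_succ_apply' psi (m+1)] at h2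

lemma W_prefix {m m' : ℕ} (h : m ≤ m') : psi^[m] [1] <+: psi^[m'] [1] := by
  induction m' with
  | zero => simp [Nat.le_zero.mp h]
  | succ m' ih =>
      rcases Nat.lt_or_ge m (m' + 1) with h' | h'
      · exact (ih (by omega)).trans (W_prefix_succ m')
      · have : m = m' + 1 := by omega
        subst this; exact List.prefix_refl _

lemma arshon_eq (m n : ℕ) (hn : n < 3 ^ m) : arshon n = (psi^[m] [1]).getD n 0 := by
  have hself : n < 3 ^ (n + 1) :=
    lt_of_lt_of_le (Nat.lt_pow_self (n := n) (by norm_num)) (Nat.pow_le_pow_right (by norm_num) (by omega))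
  rcases le_total m (n + 1) with h | h
  · obtain ⟨t, ht⟩ := W_prefix h
    rw [arshon, ← ht, List.getD_append _ _ _ _ (by rw [len_W]; exact hn)]
  · obtain ⟨t, ht⟩ := W_prefix h
    rw [arshon, ← ht, List.getD_append _ _ _ _ (by rw [len_W]; exact hself)]

lemma arshon_mem (n : ℕ) : arshon n = 1 ∨ arshon n = 2 ∨ arshon n = 3 := by
  have hn : n < (psi^[n+1] [1]).length := by
    rw [len_W]
    exact lt_of_lt_of_le (Nat.lt_pow_self (n := n) (by norm_num))
      (Nat.pow_le_pow_right (by norm_num) (by omega))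
  rw [arshon, List.getD_eq_getElem _ _ hn]
  exact word_W (n+1) _ (List.getElem_mem hn)
lemma psiA_getD (l : List ℕ) (hl : Word123 l) :
    ∀ (off k j : ℕ), k < l.length → j < 3 →
      (psiA off l).getD (3 * k + j) 0
        = ((if (off + k) % 2 = 0 then oddBlock else evenBlock) (l.getD k 0)).getD j 0 := by
  induction l with
  | nil => intro off k j hk hj; simp at hk
  | cons a l ih =>
      intro off k j hk hj
      have ha := hl a (List.mem_cons_self (a := a) (l := l))
      have hlen := len_block a ha
      cases k with
      | zero =>
          show (((if off % 2 = 0 then oddBlock a else evenBlock a)) ++ psiA (off + 1) l).getD (3 * 0 + j) 0 = _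
          have hj3 : 3 * 0 + j < (if off % 2 = 0 then oddBlock a else evenBlock a).length := by
            split <;> omega
          rw [List.getD_append _ _ _ _ hj3]
          simp only [Nat.add_zero, List.getD_cons_zero]
          split <;> norm_num
      | succ k =>
          show (((if off % 2 = 0 then oddBlock a else evenBlock a)) ++ psiA (off + 1) l).getD (3 * (k+1) + j) 0 = _
          have hj3 : (if off % 2 = 0 then oddBlock a else evenBlock a).length ≤ 3 * (k+1) + j := by
            split <;> omega
          rw [List.getD_append_right _ _ _ _ hj3]
          have e1 : 3 * (k+1) + j - (if off % 2 = 0 then oddBlock a else evenBlock a).length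
              = 3 * k + j := by split <;> omega
          rw [e1, ih (fun x hx => hl x (List.mem_cons_of_mem a hx)) (off + 1) k j (by simpa using hk) hj]
          have e2 : (off + 1 + k) % 2 = (off + (k + 1)) % 2 := by omega
          rw [e2]
          rfl

lemma arshon_block (k j : ℕ) (hj : j < 3) :
    arshon (3 * k + j)
      = ((if k % 2 = 0 then oddBlock else evenBlock) (arshon k)).getD j 0 := by
  have hk : k < 3 ^ (k + 1) :=
    lt_of_lt_of_le (Nat.lt_pow_self (n := k) (by norm_num)) (Nat.pow_le_pow_right (by norm_num) (by omega))
  have h2 : 3 * k + j < 3 ^ (k + 2) := by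
    have : 3 ^ (k + 2) = 3 * 3 ^ (k + 1) := by ring
    omega
  rw [arshon_eq (k + 2) (3 * k + j) h2]
  have e : psi^[k+2] [1] = psiA 0 (psi^[k+1] [1]) := by
    rw [Function.iterate_succ_apply', psi_eq]
  rw [e, psiA_getD _ (word_W (k+1)) 0 k j (by rw [len_W]; exact hk) hj,
    ← arshon_eq (k+1) k hk]
  norm_num

lemma a3k0 (k : ℕ) :
    arshon (3 * k) = if k % 2 = 0 then arshon k else cyc (cyc (arshon k)) := by
  have h := arshon_block k 0 (by norm_num)
  rw [Nat.add_zero] at h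
  rw [h]
  rcases Nat.mod_two_eq_zero_or_one k with hk | hk <;>
    rcases arshon_mem k with h1 | h1 | h1 <;>
      simp [hk, h1, oddBlock, evenBlock, cyc]

lemma a3k1 (k : ℕ) : arshon (3 * k + 1) = cyc (arshon k) := by
  have h := arshon_block k 1 (by norm_num)
  rw [h]
  rcases Nat.mod_two_eq_zero_or_one k with hk | hk <;>
    rcases arshon_mem k with h1 | h1 | h1 <;>
      simp [hk, h1, oddBlock, evenBlock, cyc]

lemma a3k2 (k : ℕ) :
    arshon (3 * k + 2) = if k % 2 = 0 then cyc (cyc (arshon k)) else arshon k := by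
  have h := arshon_block k 2 (by norm_num)
  rw [h]
  rcases Nat.mod_two_eq_zero_or_one k with hk | hk <;>
    rcases arshon_mem k with h1 | h1 | h1 <;>
      simp [hk, h1, oddBlock, evenBlock, cyc]

lemma K0 : ∀ n, arshon n ≠ arshon (n + 1) := by
  intro n
  induction n using Nat.strong_induction_on with
  | _ n IH =>
    rcases (show n % 3 = 0 ∨ n % 3 = 1 ∨ n % 3 = 2 by omega) with e | e | e
    · set k := n / 3 with hk
      have h1 : n = 3 * k := by omega
      have h2 : n + 1 = 3 * k + 1 := by omega
      rw [h1, a3k0 k, a3k1 k]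
      rcases Nat.mod_two_eq_zero_or_one k with hp | hp <;>
        rcases arshon_mem k with hv | hv | hv <;> simp [hp, hv, cyc]
    · set k := n / 3 with hk
      have h1 : n = 3 * k + 1 := by omega
      have h2 : n + 1 = 3 * k + 2 := by omega
      rw [h1, show 3 * k + 1 + 1 = 3 * k + 2 by omega, a3k1 k, a3k2 k]
      rcases Nat.mod_two_eq_zero_or_one k with hp | hp <;>
        rcases arshon_mem k with hv | hv | hv <;> simp [hp, hv, cyc]
    · set k := n / 3 with hk
      have h1 : n = 3 * k + 2 := by omega
      have h2 : n + 1 = 3 * (k + 1) := by omega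
      have hne := IH k (by omega)
      rw [h1, show 3 * k + 2 + 1 = 3 * (k + 1) by omega, a3k2 k, a3k0 (k + 1)]
      rcases Nat.mod_two_eq_zero_or_one k with hp | hp
      · rw [if_pos hp, if_neg (by omega : ¬ (k + 1) % 2 = 0)]
        rcases arshon_mem k with hv | hv | hv <;> rcases arshon_mem (k + 1) with hw | hw | hw <;>
          rw [hv, hw] <;>
          first
            | exact absurd (hv.trans hw.symm) hne
            | decide
      · rw [if_neg (by omega : ¬ k % 2 = 0), if_pos (by omega : (k + 1) % 2 = 0)]
        exact hne

lemma K1 (k : ℕ) : arshon (3 * k) ≠ arshon (3 * k + 2) := by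
  rw [a3k0 k, a3k2 k]
  rcases Nat.mod_two_eq_zero_or_one k with hp | hp <;>
    rcases arshon_mem k with hv | hv | hv <;> simp [hp, hv, cyc]
lemma cyc_inj (x y : ℕ) (hx : x = 1 ∨ x = 2 ∨ x = 3) (hy : y = 1 ∨ y = 2 ∨ y = 3)
    (h : cyc x = cyc y) : x = y := by
  rcases hx with hx | hx | hx <;> rcases hy with hy | hy | hy <;> subst hx <;> subst hy <;>
    first | rfl | (exfalso; revert h; decide)

lemma comb1 (k k' : ℕ) (hpar : (k + k') % 2 = 1)
    (h1 : arshon (3 * k) = arshon (3 * k' + 1))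
    (h2 : arshon (3 * k + 1) = arshon (3 * k' + 2)) : False := by
  rw [a3k0 k, a3k1 k'] at h1
  rw [a3k1 k, a3k2 k'] at h2
  rcases Nat.mod_two_eq_zero_or_one k with hp | hp
  · rw [if_pos hp] at h1
    rw [if_neg (by omega : ¬ k' % 2 = 0)] at h2
    rcases arshon_mem k with hv | hv | hv <;> rcases arshon_mem k' with hw | hw | hw <;>
      rw [hv, hw] at h1 h2 <;> revert h1 h2 <;> decide
  · rw [if_neg (by omega : ¬ k % 2 = 0)] at h1
    rw [if_pos (by omega : k' % 2 = 0)] at h2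
    rcases arshon_mem k with hv | hv | hv <;> rcases arshon_mem k' with hw | hw | hw <;>
      rw [hv, hw] at h1 h2 <;> revert h1 h2 <;> decide

lemma comb2 (k k'' : ℕ) (hpar : (k + k'') % 2 = 1)
    (h1 : arshon (3 * k + 1) = arshon (3 * k''))
    (h2 : arshon (3 * k + 2) = arshon (3 * k'' + 1)) : False := by
  rw [a3k1 k, a3k0 k''] at h1
  rw [a3k2 k, a3k1 k''] at h2
  rcases Nat.mod_two_eq_zero_or_one k with hp | hp
  · rw [if_neg (by omega : ¬ k'' % 2 = 0)] at h1
    rw [if_pos hp] at h2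
    rcases arshon_mem k with hv | hv | hv <;> rcases arshon_mem k'' with hw | hw | hw <;>
      rw [hv, hw] at h1 h2 <;> revert h1 h2 <;> decide
  · rw [if_pos (by omega : k'' % 2 = 0)] at h1
    rw [if_neg (by omega : ¬ k % 2 = 0)] at h2
    rcases arshon_mem k with hv | hv | hv <;> rcases arshon_mem k'' with hw | hw | hw <;>
      rw [hv, hw] at h1 h2 <;> revert h1 h2 <;> decide

lemma step1 (j j' : ℕ) (hpar : (j + j') % 2 = 0)
    (h1 : arshon (3 * j + 2) = arshon (3 * j' + 3))
    (h2 : arshon (3 * j + 3) = arshon (3 * j' + 4)) :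
    arshon (j + 1) = if j % 2 = 0 then cyc (cyc (arshon j)) else cyc (arshon j) := by
  rw [show 3 * j' + 3 = 3 * (j' + 1) by omega] at h1
  rw [show 3 * j + 3 = 3 * (j + 1) by omega, show 3 * j' + 4 = 3 * (j' + 1) + 1 by omega] at h2
  rw [a3k2 j, a3k0 (j' + 1)] at h1
  rw [a3k0 (j + 1), a3k1 (j' + 1)] at h2
  rcases Nat.mod_two_eq_zero_or_one j with hp | hp
  · rw [if_pos hp] at h1 ⊢
    rw [if_neg (by omega : ¬ (j' + 1) % 2 = 0)] at h1
    rw [if_neg (by omega : ¬ (j + 1) % 2 = 0)] at h2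
    rcases arshon_mem j with hv | hv | hv <;>
      rcases arshon_mem (j' + 1) with hw | hw | hw <;>
        rcases arshon_mem (j + 1) with hu | hu | hu <;>
          rw [hv, hw] at h1 <;> rw [hu, hw] at h2 <;> rw [hu, hv] <;>
            revert h1 h2 <;> decide
  · rw [if_neg (by omega : ¬ j % 2 = 0)] at h1 ⊢
    rw [if_pos (by omega : (j' + 1) % 2 = 0)] at h1
    rw [if_pos (by omega : (j + 1) % 2 = 0)] at h2
    rcases arshon_mem j with hv | hv | hv <;>
      rcases arshon_mem (j' + 1) with hw | hw | hw <;>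
        rcases arshon_mem (j + 1) with hu | hu | hu <;>
          rw [hv, hw] at h1 <;> rw [hu, hw] at h2 <;> rw [hu, hv] <;>
            revert h1 h2 <;> decide

lemma step2 (j j'' : ℕ) (hpar : (j + j'') % 2 = 0)
    (h1 : arshon (3 * j + 2) = arshon (3 * j'' + 1))
    (h2 : arshon (3 * j + 3) = arshon (3 * j'' + 2)) :
    arshon (j + 1) = if j % 2 = 0 then cyc (arshon j) else cyc (cyc (arshon j)) := by
  rw [show 3 * j + 3 = 3 * (j + 1) by omega] at h2
  rw [a3k2 j, a3k1 j''] at h1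
  rw [a3k0 (j + 1), a3k2 j''] at h2
  rcases Nat.mod_two_eq_zero_or_one j with hp | hp
  · rw [if_pos hp] at h1 ⊢
    rw [if_neg (by omega : ¬ (j + 1) % 2 = 0), if_pos (by omega : j'' % 2 = 0)] at h2
    rcases arshon_mem j with hv | hv | hv <;>
      rcases arshon_mem j'' with hw | hw | hw <;>
        rcases arshon_mem (j + 1) with hu | hu | hu <;>
          rw [hv, hw] at h1 <;> rw [hu, hw] at h2 <;> rw [hu, hv] <;>
            revert h1 h2 <;> decide
  · rw [if_neg (by omega : ¬ j % 2 = 0)] at h1 ⊢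
    rw [if_pos (by omega : (j + 1) % 2 = 0), if_neg (by omega : ¬ j'' % 2 = 0)] at h2
    rcases arshon_mem j with hv | hv | hv <;>
      rcases arshon_mem j'' with hw | hw | hw <;>
        rcases arshon_mem (j + 1) with hu | hu | hu <;>
          rw [hv, hw] at h1 <;> rw [hu, hw] at h2 <;> rw [hu, hv] <;>
            revert h1 h2 <;> decide

lemma period2_killA (m : ℕ)
    (st1 : arshon (3 * m + 1)
      = if (3 * m) % 2 = 0 then cyc (cyc (arshon (3 * m))) else cyc (arshon (3 * m)))
    (st2 : arshon (3 * m + 2)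
      = if (3 * m + 1) % 2 = 0 then cyc (cyc (arshon (3 * m + 1))) else cyc (arshon (3 * m + 1))) :
    False := by
  have hK := K1 m
  rcases Nat.mod_two_eq_zero_or_one (3 * m) with hp | hp
  · rw [if_pos hp] at st1
    rw [if_neg (by omega : ¬ (3 * m + 1) % 2 = 0), st1] at st2
    rcases arshon_mem (3 * m) with hv | hv | hv <;> rw [hv] at st2 <;>
      exact hK (by rw [hv, st2]; rfl)
  · rw [if_neg (by omega : ¬ (3 * m) % 2 = 0)] at st1
    rw [if_pos (by omega : (3 * m + 1) % 2 = 0), st1] at st2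
    rcases arshon_mem (3 * m) with hv | hv | hv <;> rw [hv] at st2 <;>
      exact hK (by rw [hv, st2]; rfl)

lemma period2_killB (m : ℕ)
    (st1 : arshon (3 * m + 1)
      = if (3 * m) % 2 = 0 then cyc (arshon (3 * m)) else cyc (cyc (arshon (3 * m))))
    (st2 : arshon (3 * m + 2)
      = if (3 * m + 1) % 2 = 0 then cyc (arshon (3 * m + 1)) else cyc (cyc (arshon (3 * m + 1)))) :
    False := by
  have hK := K1 m
  rcases Nat.mod_two_eq_zero_or_one (3 * m) with hp | hp
  · rw [if_pos hp] at st1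
    rw [if_neg (by omega : ¬ (3 * m + 1) % 2 = 0), st1] at st2
    rcases arshon_mem (3 * m) with hv | hv | hv <;> rw [hv] at st2 <;>
      exact hK (by rw [hv, st2]; rfl)
  · rw [if_neg (by omega : ¬ (3 * m) % 2 = 0)] at st1
    rw [if_pos (by omega : (3 * m + 1) % 2 = 0), st1] at st2
    rcases arshon_mem (3 * m) with hv | hv | hv <;> rw [hv] at st2 <;>
      exact hK (by rw [hv, st2]; rfl)

theorem noRep : ∀ P, 0 < P → ∀ s, (∀ i, i < 6 * P → arshon (s + i) = arshon (s + i + P)) → False := by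
  intro P
  induction P using Nat.strong_induction_on with
  | _ P IH =>
    intro hP s h
    have h' : ∀ n, s ≤ n → n < s + 6 * P → arshon n = arshon (n + P) := by
      intro n hn1 hn2
      have hh := h (n - s) (by omega)
      rw [show s + (n - s) = n by omega] at hh
      exact hh
    rcases Nat.lt_or_ge P 2 with hP2 | hP2
    · have hP1 : P = 1 := by omega
      subst hP1
      exact K0 s (h' s le_rfl (by omega))
    · rcases (show P % 3 = 0 ∨ P % 3 = 1 ∨ P % 3 = 2 by omega) with e | e | e
      · -- descent
        have hQ : P = 3 * (P / 3) := by omega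
        set Q := P / 3 with hQd
        apply IH Q (by omega) (by omega) ((s + 1) / 3)
        intro i hi
        set k := (s + 1) / 3 + i with hkd
        have hb := h' (3 * k + 1) (by omega) (by omega)
        rw [show 3 * k + 1 + P = 3 * (k + Q) + 1 by omega, a3k1 k, a3k1 (k + Q)] at hb
        have := cyc_inj _ _ (arshon_mem k) (arshon_mem (k + Q)) hb
        rw [show (s + 1) / 3 + i + Q = k + Q by rw [hkd]]
        exact this
      · -- P % 3 = 1
        have ht : P = 3 * (P / 3) + 1 := by omega
        set t := P / 3 with htd
        rcases Nat.mod_two_eq_zero_or_one t with hte | hto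
        · -- t even : two steps then kill
          set m := (s + 7) / 9 with hmd
          have hb1 := h' (3 * (3 * m) + 2) (by omega) (by omega)
          rw [show 3 * (3 * m) + 2 + P = 3 * (3 * m + t) + 3 by omega] at hb1
          have hb2 := h' (3 * (3 * m) + 3) (by omega) (by omega)
          rw [show 3 * (3 * m) + 3 + P = 3 * (3 * m + t) + 4 by omega] at hb2
          have st1 := step1 (3 * m) (3 * m + t) (by omega) hb1 hb2
          have hc1 := h' (3 * (3 * m + 1) + 2) (by omega) (by omega)
          rw [show 3 * (3 * m + 1) + 2 + P = 3 * (3 * m + 1 + t) + 3 by omega] at hc1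
          have hc2 := h' (3 * (3 * m + 1) + 3) (by omega) (by omega)
          rw [show 3 * (3 * m + 1) + 3 + P = 3 * (3 * m + 1 + t) + 4 by omega] at hc2
          have st2 := step1 (3 * m + 1) (3 * m + 1 + t) (by omega) hc1 hc2
          rw [show 3 * m + 1 + 1 = 3 * m + 2 by omega] at st2
          exact period2_killA m st1 st2
        · -- t odd : comb1
          set k := (s + 2) / 3 with hkd
          have hb1 := h' (3 * k) (by omega) (by omega)
          rw [show 3 * k + P = 3 * (k + t) + 1 by omega] at hb1
          have hb2 := h' (3 * k + 1) (by omega) (by omega)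
          rw [show 3 * k + 1 + P = 3 * (k + t) + 2 by omega] at hb2
          exact comb1 k (k + t) (by omega) hb1 hb2
      · -- P % 3 = 2
        have hu : P = 3 * (P / 3) + 2 := by omega
        set u := P / 3 with hud
        rcases Nat.mod_two_eq_zero_or_one u with hue | huo
        · -- u even : comb2
          set k := (s + 2) / 3 with hkd
          have hb1 := h' (3 * k + 1) (by omega) (by omega)
          rw [show 3 * k + 1 + P = 3 * (k + u + 1) by omega] at hb1
          have hb2 := h' (3 * k + 2) (by omega) (by omega)
          rw [show 3 * k + 2 + P = 3 * (k + u + 1) + 1 by omega] at hb2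
          exact comb2 k (k + u + 1) (by omega) hb1 hb2
        · -- u odd : two steps then kill
          set m := (s + 7) / 9 with hmd
          have hb1 := h' (3 * (3 * m) + 2) (by omega) (by omega)
          rw [show 3 * (3 * m) + 2 + P = 3 * (3 * m + u + 1) + 1 by omega] at hb1
          have hb2 := h' (3 * (3 * m) + 3) (by omega) (by omega)
          rw [show 3 * (3 * m) + 3 + P = 3 * (3 * m + u + 1) + 2 by omega] at hb2
          have st1 := step2 (3 * m) (3 * m + u + 1) (by omega) hb1 hb2
          have hc1 := h' (3 * (3 * m + 1) + 2) (by omega) (by omega)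
          rw [show 3 * (3 * m + 1) + 2 + P = 3 * (3 * m + 1 + u + 1) + 1 by omega] at hc1
          have hc2 := h' (3 * (3 * m + 1) + 3) (by omega) (by omega)
          rw [show 3 * (3 * m + 1) + 3 + P = 3 * (3 * m + 1 + u + 1) + 2 by omega] at hc2
          have st2 := step2 (3 * m + 1) (3 * m + 1 + u + 1) (by omega) hc1 hc2
          rw [show 3 * m + 1 + 1 = 3 * m + 2 by omega] at st2
          exact period2_killB m st1 st2
def prA (n : ℕ) : List ℕ := (List.range n).map arshon

def BIA (f : List ℕ → List ℕ) (k : ℕ) : List ℕ :=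
  f [arshon (3 * k)] ++ (f [arshon (3 * k + 1)] ++ f [arshon (3 * k + 2)])

lemma prA_len (n : ℕ) : (prA n).length = n := by simp [prA]

lemma prA_getD (n i : ℕ) (h : i < n) : (prA n).getD i 0 = arshon i := by
  rw [prA, List.getD_eq_getElem _ _ (by simpa using h)]
  simp

lemma prA_succ (n : ℕ) : prA (n + 1) = prA n ++ [arshon n] := by
  simp [prA, List.range_succ]

section Glue

variable (f : List ℕ → List ℕ)

lemma f_nil (hm : ∀ u v, f (u ++ v) = f u ++ f v) : f [] = [] := by
  have h0 := hm [] []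
  simpa using h0

lemma ell_zero (hm : ∀ u v, f (u ++ v) = f u ++ f v) : (f (prA 0)).length = 0 := by
  have h0 : prA 0 = [] := rfl
  rw [h0, f_nil f hm]
  rfl

lemma E1 (hm : ∀ u v, f (u ++ v) = f u ++ f v)
    (hp : ∀ n, f (prA n) = prA (f (prA n)).length) (n : ℕ) :
    prA (f (prA (n + 1))).length = prA (f (prA n)).length ++ f [arshon n] := by
  calc prA (f (prA (n + 1))).length = f (prA (n + 1)) := (hp (n + 1)).symm
    _ = f (prA n ++ [arshon n]) := by rw [prA_succ]
    _ = f (prA n) ++ f [arshon n] := hm _ _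
    _ = prA (f (prA n)).length ++ f [arshon n] := by rw [hp n]; simp [prA_len]

lemma E3 (hm : ∀ u v, f (u ++ v) = f u ++ f v)
    (hp : ∀ n, f (prA n) = prA (f (prA n)).length) (k : ℕ) :
    prA (f (prA (3 * k + 3))).length = prA (f (prA (3 * k))).length ++ BIA f k := by
  have e1 := E1 f hm hp (3 * k)
  have e2 := E1 f hm hp (3 * k + 1)
  have e3 := E1 f hm hp (3 * k + 2)
  rw [show 3 * k + 1 + 1 = 3 * k + 2 by omega] at e2
  rw [show 3 * k + 2 + 1 = 3 * k + 3 by omega] at e3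
  rw [e3, e2, e1, BIA]
  simp [List.append_assoc]

lemma BIA_len (k : ℕ) :
    (BIA f k).length = (f [1]).length + (f [2]).length + (f [3]).length := by
  rw [BIA, List.length_append, List.length_append, a3k0 k, a3k1 k, a3k2 k]
  rcases Nat.mod_two_eq_zero_or_one k with hp2 | hp2 <;>
    rcases arshon_mem k with hv | hv | hv <;>
      rw [hv] <;> simp [hp2, cyc] <;> omega

lemma ell3 (hm : ∀ u v, f (u ++ v) = f u ++ f v)
    (hp : ∀ n, f (prA n) = prA (f (prA n)).length) : ∀ k, (f (prA (3 * k))).length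
    = k * ((f [1]).length + (f [2]).length + (f [3]).length) := by
  intro k
  induction k with
  | zero => simpa using ell_zero f hm
  | succ k ih =>
      have e := congrArg List.length (E3 f hm hp k)
      simp only [prA_len, List.length_append, BIA_len f] at e
      rw [show 3 * (k + 1) = 3 * k + 3 by omega, e, ih]
      ring

lemma point (hm : ∀ u v, f (u ++ v) = f u ++ f v)
    (hp : ∀ n, f (prA n) = prA (f (prA n)).length) (k i : ℕ) (hi : i < (f [1]).length + (f [2]).length + (f [3]).length) :
    arshon (k * ((f [1]).length + (f [2]).length + (f [3]).length) + i)
      = (BIA f k).getD i 0 := by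
  set L := (f [1]).length + (f [2]).length + (f [3]).length with hL
  have e := E3 f hm hp k
  rw [ell3 f hm hp k, ← hL] at e
  have hlen : i < (BIA f k).length := by rw [BIA_len f, ← hL]; exact hi
  have h1 : (prA (f (prA (3 * k + 3))).length).getD (k * L + i) 0 = arshon (k * L + i) := by
    apply prA_getD
    have := congrArg List.length e
    rw [prA_len, List.length_append, prA_len] at this
    omega
  rw [← h1, e, List.getD_append_right _ _ _ _ (by rw [prA_len]; omega)]
  congr 1
  rw [prA_len]
  omega

lemma run_false (hm : ∀ u v, f (u ++ v) = f u ++ f v)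
    (hp : ∀ n, f (prA n) = prA (f (prA n)).length) (k₀ : ℕ)
    (hL : 0 < (f [1]).length + (f [2]).length + (f [3]).length)
    (hrun : ∀ i, i ≤ 6 → BIA f (k₀ + i) = BIA f k₀) : False := by
  set L := (f [1]).length + (f [2]).length + (f [3]).length with hLd
  apply noRep L hL (k₀ * L)
  intro i hi
  have hdm := Nat.div_add_mod i L
  have hr : i % L < L := Nat.mod_lt _ hL
  have hq : i / L < 6 := Nat.div_lt_of_lt_mul (by omega)
  have e1 : k₀ * L + i = (k₀ + i / L) * L + i % L := by
    calc k₀ * L + i = k₀ * L + (L * (i / L) + i % L) := by rw [hdm]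
      _ = (k₀ + i / L) * L + i % L := by ring
  have e2 : k₀ * L + i + L = (k₀ + i / L + 1) * L + i % L := by
    calc k₀ * L + i + L = k₀ * L + (L * (i / L) + i % L) + L := by rw [hdm]
      _ = (k₀ + i / L + 1) * L + i % L := by ring
  rw [e2, e1, point f hm hp _ _ hr, point f hm hp _ _ hr,
    hrun (i / L) (by omega), show k₀ + i / L + 1 = k₀ + (i / L + 1) by omega,
    hrun (i / L + 1) (by omega)]

end Glue

def w81 : List ℕ :=
  [1, 2, 3, 1, 3, 2, 3, 1, 2, 3, 2, 1, 3, 1, 2, 1, 3, 2, 3, 1, 2, 3, 2, 1, 2, 3, 1, 2, 1, 3,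
   2, 3, 1, 3, 2, 1, 3, 1, 2, 3, 2, 1, 2, 3, 1, 3, 2, 1, 3, 1, 2, 1, 3, 2, 3, 1, 2, 3, 2, 1,
   2, 3, 1, 2, 1, 3, 2, 3, 1, 3, 2, 1, 2, 3, 1, 2, 1, 3, 1, 2, 3]

lemma W4 : psi^[4] [1] = w81 := by decide +kernel

lemma aval (n : ℕ) (hn : n < 81) : arshon n = w81.getD n 0 := by
  rw [arshon_eq 4 n (by norm_num; omega), W4]
/-- If `f` is a morphism on words over {1,2,3} with `f(w) = w` (`w` the Arshon
sequence) and at least one of `f(1), f(2), f(3)` is nonempty, then all three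
are nonempty. -/
theorem arshon_fixing_morphism_all_nonempty
    (f : List ℕ → List ℕ) (hf : IsMorphism123 f) (hfix : FixesArshon f)
    (h : f [1] ≠ [] ∨ f [2] ≠ [] ∨ f [3] ≠ []) :
    f [1] ≠ [] ∧ f [2] ≠ [] ∧ f [3] ≠ [] := by
  obtain ⟨hm, -⟩ := hf
  obtain ⟨hp0, -⟩ := hfix
  have hp : ∀ n, f (prA n) = prA (f (prA n)).length := fun n => hp0 n
  by_cases h1 : f [1] = []
  · exfalso
    have v3 : arshon 3 = 1 := by rw [aval 3 (by omega)]; decide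
    have v4 : arshon 4 = 3 := by rw [aval 4 (by omega)]; decide
    have v5 : arshon 5 = 2 := by rw [aval 5 (by omega)]; decide
    have v6 : arshon 6 = 3 := by rw [aval 6 (by omega)]; decide
    have v7 : arshon 7 = 1 := by rw [aval 7 (by omega)]; decide
    have v8 : arshon 8 = 2 := by rw [aval 8 (by omega)]; decide
    have v9 : arshon 9 = 3 := by rw [aval 9 (by omega)]; decide
    have v10 : arshon 10 = 2 := by rw [aval 10 (by omega)]; decide
    have v11 : arshon 11 = 1 := by rw [aval 11 (by omega)]; decide
    have v12 : arshon 12 = 3 := by rw [aval 12 (by omega)]; decide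
    have v13 : arshon 13 = 1 := by rw [aval 13 (by omega)]; decide
    have v14 : arshon 14 = 2 := by rw [aval 14 (by omega)]; decide
    have v15 : arshon 15 = 1 := by rw [aval 15 (by omega)]; decide
    have v16 : arshon 16 = 3 := by rw [aval 16 (by omega)]; decide
    have v17 : arshon 17 = 2 := by rw [aval 17 (by omega)]; decide
    have v18 : arshon 18 = 3 := by rw [aval 18 (by omega)]; decide
    have v19 : arshon 19 = 1 := by rw [aval 19 (by omega)]; decide
    have v20 : arshon 20 = 2 := by rw [aval 20 (by omega)]; decide
    have v21 : arshon 21 = 3 := by rw [aval 21 (by omega)]; decide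
    have v22 : arshon 22 = 2 := by rw [aval 22 (by omega)]; decide
    have v23 : arshon 23 = 1 := by rw [aval 23 (by omega)]; decide
    have hL : 0 < (f [1]).length + (f [2]).length + (f [3]).length := by
      rcases h with H | H | H
      · exact absurd h1 H
      · have := List.length_pos_iff.mpr H; omega
      · have := List.length_pos_iff.mpr H; omega
    apply run_false f hm hp 1 hL
    intro i hi
    interval_cases i <;> norm_num [BIA, h1, v3, v4, v5, v6, v7, v8, v9, v10, v11, v12, v13, v14, v15, v16, v17, v18, v19, v20, v21, v22, v23]
  · by_cases h2 : f [2] = []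
    · exfalso
      have v30 : arshon 30 = 2 := by rw [aval 30 (by omega)]; decide
      have v31 : arshon 31 = 3 := by rw [aval 31 (by omega)]; decide
      have v32 : arshon 32 = 1 := by rw [aval 32 (by omega)]; decide
      have v33 : arshon 33 = 3 := by rw [aval 33 (by omega)]; decide
      have v34 : arshon 34 = 2 := by rw [aval 34 (by omega)]; decide
      have v35 : arshon 35 = 1 := by rw [aval 35 (by omega)]; decide
      have v36 : arshon 36 = 3 := by rw [aval 36 (by omega)]; decide
      have v37 : arshon 37 = 1 := by rw [aval 37 (by omega)]; decide
      have v38 : arshon 38 = 2 := by rw [aval 38 (by omega)]; decide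
      have v39 : arshon 39 = 3 := by rw [aval 39 (by omega)]; decide
      have v40 : arshon 40 = 2 := by rw [aval 40 (by omega)]; decide
      have v41 : arshon 41 = 1 := by rw [aval 41 (by omega)]; decide
      have v42 : arshon 42 = 2 := by rw [aval 42 (by omega)]; decide
      have v43 : arshon 43 = 3 := by rw [aval 43 (by omega)]; decide
      have v44 : arshon 44 = 1 := by rw [aval 44 (by omega)]; decide
      have v45 : arshon 45 = 3 := by rw [aval 45 (by omega)]; decide
      have v46 : arshon 46 = 2 := by rw [aval 46 (by omega)]; decide
      have v47 : arshon 47 = 1 := by rw [aval 47 (by omega)]; decide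
      have v48 : arshon 48 = 3 := by rw [aval 48 (by omega)]; decide
      have v49 : arshon 49 = 1 := by rw [aval 49 (by omega)]; decide
      have v50 : arshon 50 = 2 := by rw [aval 50 (by omega)]; decide
      have hL : 0 < (f [1]).length + (f [2]).length + (f [3]).length := by
        have := List.length_pos_iff.mpr h1; omega
      apply run_false f hm hp 10 hL
      intro i hi
      interval_cases i <;> norm_num [BIA, h2, v30, v31, v32, v33, v34, v35, v36, v37, v38, v39, v40, v41, v42, v43, v44, v45, v46, v47, v48, v49, v50]
    · by_cases h3 : f [3] = []
      · exfalso
        have v57 : arshon 57 = 3 := by rw [aval 57 (by omega)]; decide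
        have v58 : arshon 58 = 2 := by rw [aval 58 (by omega)]; decide
        have v59 : arshon 59 = 1 := by rw [aval 59 (by omega)]; decide
        have v60 : arshon 60 = 2 := by rw [aval 60 (by omega)]; decide
        have v61 : arshon 61 = 3 := by rw [aval 61 (by omega)]; decide
        have v62 : arshon 62 = 1 := by rw [aval 62 (by omega)]; decide
        have v63 : arshon 63 = 2 := by rw [aval 63 (by omega)]; decide
        have v64 : arshon 64 = 1 := by rw [aval 64 (by omega)]; decide
        have v65 : arshon 65 = 3 := by rw [aval 65 (by omega)]; decide
        have v66 : arshon 66 = 2 := by rw [aval 66 (by omega)]; decide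
        have v67 : arshon 67 = 3 := by rw [aval 67 (by omega)]; decide
        have v68 : arshon 68 = 1 := by rw [aval 68 (by omega)]; decide
        have v69 : arshon 69 = 3 := by rw [aval 69 (by omega)]; decide
        have v70 : arshon 70 = 2 := by rw [aval 70 (by omega)]; decide
        have v71 : arshon 71 = 1 := by rw [aval 71 (by omega)]; decide
        have v72 : arshon 72 = 2 := by rw [aval 72 (by omega)]; decide
        have v73 : arshon 73 = 3 := by rw [aval 73 (by omega)]; decide
        have v74 : arshon 74 = 1 := by rw [aval 74 (by omega)]; decide
        have v75 : arshon 75 = 2 := by rw [aval 75 (by omega)]; decide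
        have v76 : arshon 76 = 1 := by rw [aval 76 (by omega)]; decide
        have v77 : arshon 77 = 3 := by rw [aval 77 (by omega)]; decide
        have hL : 0 < (f [1]).length + (f [2]).length + (f [3]).length := by
          have := List.length_pos_iff.mpr h1; omega
        apply run_false f hm hp 19 hL
        intro i hi
        interval_cases i <;> norm_num [BIA, h3, v57, v58, v59, v60, v61, v62, v63, v64, v65, v66, v67, v68, v69, v70, v71, v72, v73, v74, v75, v76, v77]
      · exact ⟨h1, h2, h3⟩
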